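/- Let a > 0, let ψ(x) = (1/(2πa))·exp(−x²/(4πa²)), let C(m) = ∫_m^∞ (x − m)·ψ(x) dx, and define Ĉ(m) = a − m/2 + m²/(4πa). Then C(m) − Ĉ(m) = O(m⁴) as m → 0; that is, there exist constants δ > 0 and M ≥ 0 such that |C(m) − Ĉ(m)| ≤ M·m⁴ for all |m| ≤ δ. -/

import Mathlib

open MeasureTheory

/-- Bachelier's Gaussian density `ψ(x) = (1/(2πa))·exp(−x²/(4πa²))`. -/
noncomputable def bachelierPsi (a x : ℝ) : ℝ :=
  (2 * Real.pi * a)⁻¹ * Real.exp (-x ^ 2 / (4 * Real.pi * a ^ 2))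

/-- Bachelier call price as a function of `m = K − S₀`. -/
noncomputable def bachelierCall (a m : ℝ) : ℝ :=
  ∫ x in Set.Ioi m, (x - m) * bachelierPsi a x

section Aux

open Real Set Filter

variable {a : ℝ}

private lemma hb_pos (ha : 0 < a) : 0 < (4 * π * a ^ 2)⁻¹ := by positivity

private lemma psi_eq (x : ℝ) :
    bachelierPsi a x = (2 * π * a)⁻¹ * Real.exp (-((4 * π * a ^ 2)⁻¹ * x ^ 2)) := by
  unfold bachelierPsi
  rw [div_eq_mul_inv]
  ring_nf

private lemma psi_integrable (ha : 0 < a) : Integrable (bachelierPsi a) := by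
  have h : Integrable fun x : ℝ => Real.exp (-((4 * π * a ^ 2)⁻¹) * x ^ 2) :=
    integrable_exp_neg_mul_sq (hb_pos ha)
  refine (h.const_mul ((2 * π * a)⁻¹)).congr ?_
  filter_upwards with x
  rw [psi_eq]; ring_nf

private lemma xpsi_integrable (ha : 0 < a) : Integrable (fun x => x * bachelierPsi a x) := by
  have h : Integrable fun x : ℝ => x * Real.exp (-((4 * π * a ^ 2)⁻¹) * x ^ 2) :=
    integrable_mul_exp_neg_mul_sq (hb_pos ha)
  refine (h.const_mul ((2 * π * a)⁻¹)).congr ?_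
  filter_upwards with x
  rw [psi_eq]; ring_nf

private lemma psi_total (ha : 0 < a) : ∫ x : ℝ, bachelierPsi a x = 1 := by
  have h1 : ∫ x : ℝ, Real.exp (-((4 * π * a ^ 2)⁻¹) * x ^ 2)
      = Real.sqrt (π / (4 * π * a ^ 2)⁻¹) := integral_gaussian _
  have h2 : π / (4 * π * a ^ 2)⁻¹ = (2 * π * a) ^ 2 := by
    have hπ : π ≠ 0 := Real.pi_ne_zero
    have ha' : a ≠ 0 := ne_of_gt ha
    field_simp
    ring
  have h3 : Real.sqrt ((2 * π * a) ^ 2) = 2 * π * a :=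
    Real.sqrt_sq (by positivity)
  calc ∫ x : ℝ, bachelierPsi a x
      = ∫ x : ℝ, (2 * π * a)⁻¹ * Real.exp (-((4 * π * a ^ 2)⁻¹) * x ^ 2) := by
        congr 1; ext x; rw [psi_eq]; ring_nf
    _ = (2 * π * a)⁻¹ * Real.sqrt (π / (4 * π * a ^ 2)⁻¹) := by
        rw [MeasureTheory.integral_const_mul, h1]
    _ = 1 := by
        rw [h2, h3]
        field_simp

private lemma psi_Iic_zero (ha : 0 < a) : ∫ x in Iic (0:ℝ), bachelierPsi a x = 1/2 := by
  have heven : ∀ x : ℝ, bachelierPsi a (-x) = bachelierPsi a x := by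
    intro x; unfold bachelierPsi; rw [neg_pow]; ring_nf
  have h1 : ∫ x in Iic (0:ℝ), bachelierPsi a x = ∫ x in Ioi (0:ℝ), bachelierPsi a x := by
    have := integral_comp_neg_Iic (0:ℝ) (bachelierPsi a)
    simp only [heven, neg_zero] at this
    exact this.symm ▸ this
  have h2 : (∫ x in Iic (0:ℝ), bachelierPsi a x) + ∫ x in Ioi (0:ℝ), bachelierPsi a x = 1 := by
    rw [intervalIntegral.integral_Iic_add_Ioi (psi_integrable ha).integrableOn
      (psi_integrable ha).integrableOn]
    exact psi_total ha
  linarith [h1, h2]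

private lemma psi_Ioi (ha : 0 < a) (m : ℝ) :
    ∫ x in Ioi m, bachelierPsi a x = 1/2 - ∫ x in (0:ℝ)..m, bachelierPsi a x := by
  have h1 : (∫ x in Iic m, bachelierPsi a x) + ∫ x in Ioi m, bachelierPsi a x = 1 := by
    rw [intervalIntegral.integral_Iic_add_Ioi (psi_integrable ha).integrableOn
      (psi_integrable ha).integrableOn]
    exact psi_total ha
  have h2 : (∫ x in Iic m, bachelierPsi a x) - ∫ x in Iic (0:ℝ), bachelierPsi a x
      = ∫ x in (0:ℝ)..m, bachelierPsi a x :=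
    intervalIntegral.integral_Iic_sub_Iic (psi_integrable ha).integrableOn
      (psi_integrable ha).integrableOn
  have h3 := psi_Iic_zero ha
  linarith

private lemma xpsi_Ioi (ha : 0 < a) (m : ℝ) :
    ∫ x in Ioi m, x * bachelierPsi a x
      = a * Real.exp (-((4 * π * a ^ 2)⁻¹ * m ^ 2)) := by
  obtain ⟨b, hbdef⟩ : ∃ b : ℝ, b = (4 * π * a ^ 2)⁻¹ := ⟨_, rfl⟩
  rw [← hbdef]
  have hb : 0 < b := hbdef ▸ hb_pos ha
  have hderiv : ∀ x ∈ Ici m, HasDerivAt (fun x => -a * Real.exp (-(b * x ^ 2)))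
      (x * bachelierPsi a x) x := by
    intro x _
    have h1 : HasDerivAt (fun x : ℝ => -(b * x ^ 2)) (-(b * (2 * x))) x := by
      have := ((hasDerivAt_pow 2 x).const_mul b).neg
      simp at this; exact this
    have h2 := (h1.exp.const_mul (-a))
    refine h2.congr_deriv ?_
    rw [psi_eq]
    have hπ : π ≠ 0 := Real.pi_ne_zero
    have ha' : a ≠ 0 := ne_of_gt ha
    rw [hbdef]
    field_simp
    ring
  have htend : Tendsto (fun x => -a * Real.exp (-(b * x ^ 2))) atTop (nhds 0) := by
    have h1 : Tendsto (fun x : ℝ => b * x ^ 2) atTop atTop :=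
      (tendsto_pow_atTop two_ne_zero).const_mul_atTop hb
    have h2 : Tendsto (fun x : ℝ => -(b * x ^ 2)) atTop atBot :=
      tendsto_neg_atTop_atBot.comp h1
    have h3 : Tendsto (fun x : ℝ => Real.exp (-(b * x ^ 2))) atTop (nhds 0) :=
      Real.tendsto_exp_atBot.comp h2
    simpa using h3.const_mul (-a)
  have := MeasureTheory.integral_Ioi_of_hasDerivAt_of_tendsto' hderiv
    ((xpsi_integrable ha).integrableOn) htend
  rw [this]
  ring

private lemma call_formula (ha : 0 < a) (m : ℝ) :
    bachelierCall a m = a * Real.exp (-((4 * π * a ^ 2)⁻¹ * m ^ 2))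
      - m * (1/2 - ∫ x in (0:ℝ)..m, bachelierPsi a x) := by
  unfold bachelierCall
  have h1 : ∀ x : ℝ, (x - m) * bachelierPsi a x
      = x * bachelierPsi a x - m * bachelierPsi a x := fun x => by ring
  simp_rw [h1]
  rw [MeasureTheory.integral_sub ((xpsi_integrable ha).integrableOn)
    (((psi_integrable ha).const_mul m).integrableOn),
    MeasureTheory.integral_const_mul, xpsi_Ioi ha m, psi_Ioi ha m]

end Aux

/-- Rule of Thumb 1: the quadratic approximation `Ĉ(m) = a − m/2 + m²/(4πa)` of the
Bachelier call price satisfies `C(m) − Ĉ(m) = O(m⁴)` as `m → 0`. -/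
theorem bachelier_quadratic_approx (a : ℝ) (ha : 0 < a) :
    ∃ δ > (0 : ℝ), ∃ M : ℝ, 0 ≤ M ∧ ∀ m : ℝ, |m| ≤ δ →
      |bachelierCall a m - (a - m / 2 + m ^ 2 / (4 * Real.pi * a))| ≤ M * m ^ 4 := by
  have hπ : (0:ℝ) < Real.pi := Real.pi_pos
  obtain ⟨b, hbdef⟩ : ∃ b : ℝ, b = (4 * Real.pi * a ^ 2)⁻¹ := ⟨_, rfl⟩
  have hb : 0 < b := by rw [hbdef]; positivity
  have hψ0 : bachelierPsi a 0 = (2 * Real.pi * a)⁻¹ := by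
    unfold bachelierPsi
    norm_num
  refine ⟨a, ha, a * b ^ 2 + (2 * Real.pi * a)⁻¹ * b, by positivity, fun m hm => ?_⟩
  have hu : 0 ≤ b * m ^ 2 := by positivity
  have hu1 : b * m ^ 2 ≤ 1 := by
    have hm2 : m ^ 2 ≤ a ^ 2 := by nlinarith [abs_nonneg m, sq_abs m]
    have h4 : b * m ^ 2 ≤ b * a ^ 2 := by nlinarith
    have hba : b * a ^ 2 = (4 * Real.pi)⁻¹ := by
      rw [hbdef]; field_simp
    have hπ4 : (1:ℝ) ≤ 4 * Real.pi := by nlinarith [Real.pi_gt_three]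
    rw [hba] at h4
    calc b * m ^ 2 ≤ (4 * Real.pi)⁻¹ := h4
      _ ≤ 1 := by rw [inv_le_one_iff₀]; right; exact hπ4
  have hInt : ∫ x in (0:ℝ)..m, (bachelierPsi a x - bachelierPsi a 0)
      = (∫ x in (0:ℝ)..m, bachelierPsi a x) - m * (2 * Real.pi * a)⁻¹ := by
    rw [intervalIntegral.integral_sub ((psi_integrable ha).intervalIntegrable)
      intervalIntegrable_const, intervalIntegral.integral_const, hψ0, sub_zero, smul_eq_mul]
  have hsplit : bachelierCall a m - (a - m / 2 + m ^ 2 / (4 * Real.pi * a))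
      = a * (Real.exp (-(b * m ^ 2)) - 1 + b * m ^ 2)
        + m * ∫ x in (0:ℝ)..m, (bachelierPsi a x - bachelierPsi a 0) := by
    rw [call_formula ha m, ← hbdef, hInt]
    have hπ0 : Real.pi ≠ 0 := ne_of_gt hπ
    have ha0 : a ≠ 0 := ne_of_gt ha
    rw [hbdef]
    field_simp
    ring
  rw [hsplit]
  have hT1 : |a * (Real.exp (-(b * m ^ 2)) - 1 + b * m ^ 2)| ≤ a * b ^ 2 * m ^ 4 := by
    rw [abs_mul, abs_of_pos ha]
    have h := Real.abs_exp_sub_one_sub_id_le (x := -(b * m ^ 2))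
      (by rwa [abs_neg, abs_of_nonneg hu])
    have heq : Real.exp (-(b * m ^ 2)) - 1 - -(b * m ^ 2)
        = Real.exp (-(b * m ^ 2)) - 1 + b * m ^ 2 := by ring
    rw [heq] at h
    have hsq : (-(b * m ^ 2)) ^ 2 = b ^ 2 * m ^ 4 := by ring
    rw [hsq] at h
    nlinarith
  have hp : (0:ℝ) < (2 * Real.pi * a)⁻¹ := by positivity
  have hT2 : |m * ∫ x in (0:ℝ)..m, (bachelierPsi a x - bachelierPsi a 0)|
      ≤ (2 * Real.pi * a)⁻¹ * b * m ^ 4 := by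
    have hbound : ∀ x ∈ Set.uIoc (0:ℝ) m,
        ‖bachelierPsi a x - bachelierPsi a 0‖ ≤ (2 * Real.pi * a)⁻¹ * b * m ^ 2 := by
      intro x hx
      have hx2 : x ^ 2 ≤ m ^ 2 := by
        rcases Set.mem_uIoc.mp hx with ⟨h1, h2⟩ | ⟨h1, h2⟩
        · nlinarith
        · nlinarith
      have hpsix : bachelierPsi a x = (2 * Real.pi * a)⁻¹ * Real.exp (-(b * x ^ 2)) := by
        rw [psi_eq, hbdef]
      have hexp1 : Real.exp (-(b * x ^ 2)) ≤ 1 := by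
        rw [← Real.exp_zero]
        exact Real.exp_le_exp.mpr (by nlinarith)
      have hle : bachelierPsi a x ≤ bachelierPsi a 0 := by
        rw [hpsix, hψ0]; nlinarith
      rw [Real.norm_eq_abs, abs_of_nonpos (by linarith), hpsix, hψ0]
      have hexp_lb : 1 - b * x ^ 2 ≤ Real.exp (-(b * x ^ 2)) := by
        have := Real.add_one_le_exp (-(b * x ^ 2))
        linarith
      have h1 : 1 - Real.exp (-(b * x ^ 2)) ≤ b * m ^ 2 := by
        have h0 := mul_le_mul_of_nonneg_left hx2 hb.le
        linarith
      linarith [mul_le_mul_of_nonneg_left h1 (le_of_lt hp)]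
    have hC := intervalIntegral.norm_integral_le_of_norm_le_const hbound
    rw [abs_mul]
    have hnorm : |∫ x in (0:ℝ)..m, (bachelierPsi a x - bachelierPsi a 0)|
        ≤ (2 * Real.pi * a)⁻¹ * b * m ^ 2 * |m| := by
      simpa [Real.norm_eq_abs] using hC
    have hmm : |m| * |m| = m ^ 2 := by rw [← abs_mul, abs_mul_self]; ring
    calc |m| * |∫ x in (0:ℝ)..m, (bachelierPsi a x - bachelierPsi a 0)|
        ≤ |m| * ((2 * Real.pi * a)⁻¹ * b * m ^ 2 * |m|) :=
          mul_le_mul_of_nonneg_left hnorm (abs_nonneg m)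
      _ = (2 * Real.pi * a)⁻¹ * b * (m ^ 2 * (|m| * |m|)) := by ring
      _ = (2 * Real.pi * a)⁻¹ * b * m ^ 4 := by rw [hmm]; ring
  calc |a * (Real.exp (-(b * m ^ 2)) - 1 + b * m ^ 2)
        + m * ∫ x in (0:ℝ)..m, (bachelierPsi a x - bachelierPsi a 0)|
      ≤ |a * (Real.exp (-(b * m ^ 2)) - 1 + b * m ^ 2)|
        + |m * ∫ x in (0:ℝ)..m, (bachelierPsi a x - bachelierPsi a 0)| := abs_add_le _ _
    _ ≤ a * b ^ 2 * m ^ 4 + (2 * Real.pi * a)⁻¹ * b * m ^ 4 := add_le_add hT1 hT2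
    _ = (a * b ^ 2 + (2 * Real.pi * a)⁻¹ * b) * m ^ 4 := by ring
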